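/- Let G = (V,E) be a graph, I ⊆ V nonempty, (x,X) a feasible solution of the SDP max{1ᵀx : [[X,x],[xᵀ,1]] ⪰ 0, diag(X) = x, X_{ij} = 0 ∀{i,j} ∈ E}, and let i ∈ I satisfy either (a) X_{ij} = 0 for all j ∈ I, or (b) X_{ii} = 1 and X_{ij} = X_{jj} for all j ∈ I\{i}. Then X_I ∈ STAB²(G_I) if and only if X_{I\{i}} ∈ STAB²(G_{I\{i}}). -/

import Mathlib

open scoped Classical

/-- Feasibility for the SDP formulation ϑ₁:
max 1ᵀx s.t. [[X, x],[xᵀ,1]] ⪰ 0, diag(X) = x, X_{ij} = 0 on edges. -/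
def Theta1Feasible {V : Type} [Fintype V] (G : SimpleGraph V)
    (x : V → ℝ) (X : Matrix V V ℝ) : Prop :=
  (Matrix.fromBlocks X (Matrix.of fun i (_ : Unit) => x i)
      (Matrix.of fun (_ : Unit) j => x j) 1).PosSemidef ∧
  (∀ i, X i i = x i) ∧ (∀ i j, G.Adj i j → X i j = 0)

/-- The squared stable set polytope STAB²(H): the convex hull of the outer
products ssᵀ of incidence vectors s of stable sets of H. -/
def stab2 {W : Type} (H : SimpleGraph W) : Set (Matrix W W ℝ) :=
  convexHull ℝ {M | ∃ s : W → ℝ, (∀ i, s i = 0 ∨ s i = 1) ∧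
    (∀ i j, H.Adj i j → s i * s j = 0) ∧ M = Matrix.vecMulVec s s}

lemma mem_stab2_iff {W : Type} (H : SimpleGraph W) (M : Matrix W W ℝ) :
    M ∈ stab2 H ↔ ∃ (ι : Type) (t : Finset ι) (w : ι → ℝ) (s : ι → W → ℝ),
      (∀ k ∈ t, 0 ≤ w k) ∧ (∑ k ∈ t, w k) = 1 ∧
      (∀ k ∈ t, ∀ a, s k a = 0 ∨ s k a = 1) ∧
      (∀ k ∈ t, ∀ a b, H.Adj a b → s k a * s k b = 0) ∧
      (∀ a b, M a b = ∑ k ∈ t, w k * (s k a * s k b)) := by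
  rw [stab2, convexHull_eq]
  constructor
  · rintro ⟨ι, t, w, z, hw0, hw1, hz, rfl⟩
    refine ⟨ι, t, w, fun k => if h : k ∈ t then (hz k h).choose else fun _ => 0,
      hw0, hw1, ?_, ?_, ?_⟩
    · intro k hk a
      simp only [dif_pos hk]
      exact (hz k hk).choose_spec.1 a
    · intro k hk a b hab
      simp only [dif_pos hk]
      exact (hz k hk).choose_spec.2.1 a b hab
    · intro a b
      rw [Finset.centerMass_eq_of_sum_1 _ _ hw1]
      rw [Matrix.sum_apply]
      refine Finset.sum_congr rfl fun k hk => ?_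
      simp only [dif_pos hk, Matrix.smul_apply, smul_eq_mul]
      have h2 := congrFun (congrFun (hz k hk).choose_spec.2.2 a) b
      rw [Matrix.vecMulVec_apply] at h2
      rw [h2]
  · rintro ⟨ι, t, w, s, hw0, hw1, h01, hst, hM⟩
    refine ⟨ι, t, w, fun k => Matrix.vecMulVec (s k) (s k), hw0, hw1,
      fun k hk => ⟨s k, h01 k hk, hst k hk, rfl⟩, ?_⟩
    rw [Finset.centerMass_eq_of_sum_1 _ _ hw1]
    ext a b
    rw [Matrix.sum_apply, hM a b]
    refine Finset.sum_congr rfl fun k hk => ?_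
    simp [Matrix.vecMulVec_apply, mul_assoc]

theorem stmt14 {V : Type} [Fintype V] (G : SimpleGraph V)
    (x : V → ℝ) (X : Matrix V V ℝ) (hfeas : Theta1Feasible G x X)
    (I : Set V) (hIne : I.Nonempty) (i : V) (hi : i ∈ I)
    (hcase : (∀ j ∈ I, X i j = 0) ∨
      (X i i = 1 ∧ ∀ j ∈ I, j ≠ i → X i j = X j j)) :
    (X.submatrix (fun a : I => (a : V)) (fun a : I => (a : V)) ∈
        stab2 (G.induce I) ↔
      X.submatrix (fun a : (I \ {i} : Set V) => (a : V))
          (fun a : (I \ {i} : Set V) => (a : V)) ∈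
        stab2 (G.induce (I \ {i}))) := by
  obtain ⟨hPSD, hdiag, hedge⟩ := hfeas
  have hsym : ∀ a b, X a b = X b a := fun a b => by
    have := hPSD.1.apply (Sum.inl a) (Sum.inl b)
    simpa [Matrix.fromBlocks_apply₁₁] using this.symm
  rw [mem_stab2_iff, mem_stab2_iff]
  constructor
  · rintro ⟨ι, t, w, s, hw0, hw1, h01, hst, hsum⟩
    refine ⟨ι, t, w, fun k a => s k ⟨a, a.2.1⟩, hw0, hw1,
      fun k hk a => h01 k hk _, ?_, ?_⟩
    · intro k hk a b hab
      exact hst k hk ⟨a, a.2.1⟩ ⟨b, b.2.1⟩ hab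
    · intro a b
      exact hsum ⟨a, a.2.1⟩ ⟨b, b.2.1⟩
  · rintro ⟨ι, t, w, s, hw0, hw1, h01, hst, hsum⟩
    rcases hcase with hA | ⟨hXii, hXd⟩
    · -- case (a)
      refine ⟨ι, t, w,
        fun k a => if h : (a : V) = i then 0 else s k ⟨a, ⟨a.2, h⟩⟩,
        hw0, hw1, ?_, ?_, ?_⟩
      · intro k hk a
        by_cases ha : (a : V) = i
        · dsimp only; rw [dif_pos ha]; exact Or.inl rfl
        · dsimp only; rw [dif_neg ha]; exact h01 k hk _
      · intro k hk a b hab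
        by_cases ha : (a : V) = i
        · dsimp only; rw [dif_pos ha]; ring
        · by_cases hb : (b : V) = i
          · dsimp only; rw [dif_neg ha, dif_pos hb]; ring
          · dsimp only; rw [dif_neg ha, dif_neg hb]
            exact hst k hk ⟨a, ⟨a.2, ha⟩⟩ ⟨b, ⟨b.2, hb⟩⟩ hab
      · intro a b
        by_cases ha : (a : V) = i
        · have hL : X (a : V) (b : V) = 0 := by rw [ha]; exact hA _ b.2
          rw [show (X.submatrix (fun a : I => (a : V)) fun a : I => (a : V)) a b
              = X (a : V) (b : V) from rfl, hL]
          symm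
          refine Finset.sum_eq_zero fun k hk => ?_
          dsimp only; rw [dif_pos ha]; ring
        · by_cases hb : (b : V) = i
          · have hL : X (a : V) (b : V) = 0 := by
              rw [hb, hsym _ i]; exact hA _ a.2
            rw [show (X.submatrix (fun a : I => (a : V)) fun a : I => (a : V)) a b
                = X (a : V) (b : V) from rfl, hL]
            symm
            refine Finset.sum_eq_zero fun k hk => ?_
            dsimp only; rw [dif_neg ha, dif_pos hb]; ring
          · have := hsum ⟨a, ⟨a.2, ha⟩⟩ ⟨b, ⟨b.2, hb⟩⟩
            rw [show (X.submatrix (fun a : I => (a : V)) fun a : I => (a : V)) a b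
                = X (a : V) (b : V) from rfl]
            rw [show X (a : V) (b : V)
                = ∑ k ∈ t, w k * (s k ⟨a, ⟨a.2, ha⟩⟩ * s k ⟨b, ⟨b.2, hb⟩⟩) from this]
            refine Finset.sum_congr rfl fun k hk => ?_
            dsimp only; rw [dif_neg ha, dif_neg hb]
    · -- case (b)
      set c : ι → ℝ := fun k =>
        if ∀ j : (I \ {i} : Set V), G.Adj i (j : V) → s k j = 0 then 1 else 0 with hc_def
      have hw0' : ∀ k ∈ t,
          (¬ ∀ j : (I \ {i} : Set V), G.Adj i (j : V) → s k j = 0) → w k = 0 := by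
        intro k hk hcon
        push_neg at hcon
        obtain ⟨j, hadj, hne⟩ := hcon
        have hsj : s k j = 1 := (h01 k hk j).resolve_left hne
        have hXjj : X (j : V) (j : V) = 0 := by
          rw [← hXd (j : V) j.2.1 j.2.2]
          exact hedge i (j : V) hadj
        have hz : (∑ m ∈ t, w m * (s m j * s m j)) = 0 := by
          rw [← hsum j j]; exact hXjj
        have hterm := (Finset.sum_eq_zero_iff_of_nonneg
          (fun m hm => mul_nonneg (hw0 m hm) (mul_self_nonneg _))).mp hz k hk
        rw [hsj] at hterm
        simpa using hterm
      refine ⟨ι, t, w,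
        fun k a => if h : (a : V) = i then c k else s k ⟨a, ⟨a.2, h⟩⟩,
        hw0, hw1, ?_, ?_, ?_⟩
      · intro k hk a
        by_cases ha : (a : V) = i
        · dsimp only; rw [dif_pos ha, hc_def]
          by_cases hc : ∀ j : (I \ {i} : Set V), G.Adj i (j : V) → s k j = 0
          · dsimp only; rw [if_pos hc]; exact Or.inr rfl
          · dsimp only; rw [if_neg hc]; exact Or.inl rfl
        · dsimp only; rw [dif_neg ha]; exact h01 k hk _
      · intro k hk a b hab
        have hab' : G.Adj (a : V) (b : V) := hab
        by_cases ha : (a : V) = i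
        · by_cases hb : (b : V) = i
          · rw [ha, hb] at hab'
            exact (G.irrefl hab').elim
          · dsimp only; rw [dif_pos ha, dif_neg hb]
            by_cases hc : ∀ j : (I \ {i} : Set V), G.Adj i (j : V) → s k j = 0
            · rw [hc ⟨b, ⟨b.2, hb⟩⟩ (ha ▸ hab')]; ring
            · rw [hc_def]; dsimp only; rw [if_neg hc]; ring
        · by_cases hb : (b : V) = i
          · dsimp only; rw [dif_neg ha, dif_pos hb]
            by_cases hc : ∀ j : (I \ {i} : Set V), G.Adj i (j : V) → s k j = 0
            · rw [hc ⟨a, ⟨a.2, ha⟩⟩ (hb ▸ hab'.symm)]; ring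
            · rw [hc_def]; dsimp only; rw [if_neg hc]; ring
          · dsimp only; rw [dif_neg ha, dif_neg hb]
            exact hst k hk ⟨a, ⟨a.2, ha⟩⟩ ⟨b, ⟨b.2, hb⟩⟩ hab'
      · intro a b
        rw [show (X.submatrix (fun a : I => (a : V)) fun a : I => (a : V)) a b
            = X (a : V) (b : V) from rfl]
        by_cases ha : (a : V) = i
        · by_cases hb : (b : V) = i
          · rw [ha, hb, hXii, ← hw1]
            refine Finset.sum_congr rfl fun k hk => ?_
            dsimp only; rw [dif_pos ha, dif_pos hb]
            by_cases hc : ∀ j : (I \ {i} : Set V), G.Adj i (j : V) → s k j = 0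
            · rw [hc_def]; dsimp only; rw [if_pos hc]; ring
            · rw [hw0' k hk hc]; ring
          · have e1 : X (a : V) (b : V) = X (b : V) (b : V) := by
              rw [ha]; exact hXd _ b.2 hb
            have e2 : X (b : V) (b : V)
                = ∑ k ∈ t, w k * (s k ⟨b, ⟨b.2, hb⟩⟩ * s k ⟨b, ⟨b.2, hb⟩⟩) :=
              hsum ⟨b, ⟨b.2, hb⟩⟩ ⟨b, ⟨b.2, hb⟩⟩
            rw [e1, e2]
            refine Finset.sum_congr rfl fun k hk => ?_
            dsimp only; rw [dif_pos ha, dif_neg hb]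
            by_cases hc : ∀ j : (I \ {i} : Set V), G.Adj i (j : V) → s k j = 0
            · rw [hc_def]; dsimp only; rw [if_pos hc]
              rcases h01 k hk ⟨b, ⟨b.2, hb⟩⟩ with h | h <;> rw [h] <;> ring
            · rw [hw0' k hk hc]; ring
        · by_cases hb : (b : V) = i
          · have e1 : X (a : V) (b : V) = X (a : V) (a : V) := by
              rw [hb, hsym _ i]; exact hXd _ a.2 ha
            have e2 : X (a : V) (a : V)
                = ∑ k ∈ t, w k * (s k ⟨a, ⟨a.2, ha⟩⟩ * s k ⟨a, ⟨a.2, ha⟩⟩) :=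
              hsum ⟨a, ⟨a.2, ha⟩⟩ ⟨a, ⟨a.2, ha⟩⟩
            rw [e1, e2]
            refine Finset.sum_congr rfl fun k hk => ?_
            dsimp only; rw [dif_neg ha, dif_pos hb]
            by_cases hc : ∀ j : (I \ {i} : Set V), G.Adj i (j : V) → s k j = 0
            · rw [hc_def]; dsimp only; rw [if_pos hc]
              rcases h01 k hk ⟨a, ⟨a.2, ha⟩⟩ with h | h <;> rw [h] <;> ring
            · rw [hw0' k hk hc]; ring
          · rw [show X (a : V) (b : V)
                = ∑ k ∈ t, w k * (s k ⟨a, ⟨a.2, ha⟩⟩ * s k ⟨b, ⟨b.2, hb⟩⟩) from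
                hsum ⟨a, ⟨a.2, ha⟩⟩ ⟨b, ⟨b.2, hb⟩⟩]
            refine Finset.sum_congr rfl fun k hk => ?_
            dsimp only; rw [dif_neg ha, dif_neg hb]
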